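/- arXiv:2204.12133 — 5 statements merged into one kernel-verified Lean document; each statement's English description precedes it below -/
import Mathlib

section
/- (Satisfaction Lemma for many-sorted algebra.) For each MSA signature morphism φ : (S,F) → (S',F'), each (S,F)-sentence ρ, and each (S',F')-algebra A', it holds that A' ⊨ φρ if and only if φ↾A' ⊨ ρ. -/
/-! Many-sorted algebra basics -/

structure MSSignature (S : Type) where
  Op : (n : ℕ) → (Fin n → S) → S → Type

structure MSAlgebra {S : Type} (Sig : MSSignature S) where
  carrier : S → Type
  op : ∀ {n : ℕ} {ar : Fin n → S} {s : S}, Sig.Op n ar s → (∀ i, carrier (ar i)) → carrier s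

inductive MSTerm {S : Type} (Sig : MSSignature S) : S → Type where
  | app {n : ℕ} {ar : Fin n → S} {s : S} (σ : Sig.Op n ar s)
      (args : ∀ i, MSTerm Sig (ar i)) : MSTerm Sig s

def MSAlgebra.eval {S : Type} {Sig : MSSignature S} (A : MSAlgebra Sig) :
    ∀ {s : S}, MSTerm Sig s → A.carrier s
  | _, .app σ args => A.op σ (fun i => A.eval (args i))

structure MSHom {S : Type} {Sig : MSSignature S} (A B : MSAlgebra Sig) where
  toFun : ∀ s, A.carrier s → B.carrier s
  map_op : ∀ {n : ℕ} {ar : Fin n → S} {s : S} (σ : Sig.Op n ar s) (args : ∀ i, A.carrier (ar i)),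
    toFun s (A.op σ args) = B.op σ (fun i => toFun (ar i) (args i))

def MSHom.id {S : Type} {Sig : MSSignature S} (A : MSAlgebra Sig) : MSHom A A :=
  ⟨fun _ a => a, fun _ _ => rfl⟩

def MSHom.comp {S : Type} {Sig : MSSignature S} {A B C : MSAlgebra Sig}
    (h : MSHom A B) (g : MSHom B C) : MSHom A C where
  toFun s a := g.toFun s (h.toFun s a)
  map_op σ args := by
    show g.toFun _ (h.toFun _ (A.op σ args)) = _
    rw [h.map_op, g.map_op]

def termAlgebra {S : Type} (Sig : MSSignature S) : MSAlgebra Sig where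
  carrier := MSTerm Sig
  op σ args := .app σ args
/-! Variables, sentences, signature morphisms (MSA) -/

def MSSignature.extend {S : Type} (Sig : MSSignature S) (V : Type) (vs : V → S) :
    MSSignature S where
  Op n ar s := Sig.Op n ar s ⊕ {v : V // vs v = s ∧ n = 0}

def MSAlgebra.expand {S : Type} {Sig : MSSignature S} (A : MSAlgebra Sig)
    {V : Type} {vs : V → S} (θ : ∀ v, A.carrier (vs v)) :
    MSAlgebra (Sig.extend V vs) where
  carrier := A.carrier
  op := fun σ args =>
    match σ with
    | Sum.inl σ => A.op σ args
    | Sum.inr ⟨v, hv, _⟩ => hv ▸ θ v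

inductive MSSentence {S : Type} : MSSignature S → Type 1 where
  | eq {Sig : MSSignature S} {s : S} (t t' : MSTerm Sig s) : MSSentence Sig
  | and {Sig : MSSignature S} (a b : MSSentence Sig) : MSSentence Sig
  | or {Sig : MSSignature S} (a b : MSSentence Sig) : MSSentence Sig
  | imp {Sig : MSSignature S} (a b : MSSentence Sig) : MSSentence Sig
  | not {Sig : MSSignature S} (a : MSSentence Sig) : MSSentence Sig
  | all {Sig : MSSignature S} (V : Type) (vs : V → S)
      (ρ : MSSentence (Sig.extend V vs)) : MSSentence Sig
  | ex {Sig : MSSignature S} (V : Type) (vs : V → S)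
      (ρ : MSSentence (Sig.extend V vs)) : MSSentence Sig

def MSSatisfies {S : Type} : ∀ {Sig : MSSignature S}, MSAlgebra Sig → MSSentence Sig → Prop
  | _, A, .eq t t' => A.eval t = A.eval t'
  | _, A, .and a b => MSSatisfies A a ∧ MSSatisfies A b
  | _, A, .or a b => MSSatisfies A a ∨ MSSatisfies A b
  | _, A, .imp a b => MSSatisfies A a → MSSatisfies A b
  | _, A, .not a => ¬ MSSatisfies A a
  | _, A, .all _ _ ρ => ∀ θ, MSSatisfies (A.expand θ) ρ
  | _, A, .ex _ _ ρ => ¬ ∀ θ, ¬ MSSatisfies (A.expand θ) ρ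

structure MSSigMorphism {S S' : Type} (Sig : MSSignature S) (Sig' : MSSignature S') where
  sortMap : S → S'
  opMap : ∀ {n : ℕ} {ar : Fin n → S} {s : S},
    Sig.Op n ar s → Sig'.Op n (sortMap ∘ ar) (sortMap s)

def MSSigMorphism.reduct {S S' : Type} {Sig : MSSignature S} {Sig' : MSSignature S'}
    (φ : MSSigMorphism Sig Sig') (A' : MSAlgebra Sig') : MSAlgebra Sig where
  carrier s := A'.carrier (φ.sortMap s)
  op σ args := A'.op (φ.opMap σ) args

def MSTerm.translate {S S' : Type} {Sig : MSSignature S} {Sig' : MSSignature S'}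
    (φ : MSSigMorphism Sig Sig') : ∀ {s : S}, MSTerm Sig s → MSTerm Sig' (φ.sortMap s)
  | _, .app σ args => .app (φ.opMap σ) (fun i => (args i).translate φ)

def MSSigMorphism.extend {S S' : Type} {Sig : MSSignature S} {Sig' : MSSignature S'}
    (φ : MSSigMorphism Sig Sig') (V : Type) (vs : V → S) :
    MSSigMorphism (Sig.extend V vs) (Sig'.extend V (φ.sortMap ∘ vs)) where
  sortMap := φ.sortMap
  opMap := fun σ =>
    match σ with
    | Sum.inl σ => Sum.inl (φ.opMap σ)
    | Sum.inr ⟨v, hv, hn⟩ => Sum.inr ⟨v, by simp [hv], hn⟩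

def MSSentence.translate {S S' : Type} :
    ∀ {Sig : MSSignature S} {Sig' : MSSignature S'},
      MSSigMorphism Sig Sig' → MSSentence Sig → MSSentence Sig'
  | _, _, φ, .eq t t' => .eq (t.translate φ) (t'.translate φ)
  | _, _, φ, .and a b => .and (a.translate φ) (b.translate φ)
  | _, _, φ, .or a b => .or (a.translate φ) (b.translate φ)
  | _, _, φ, .imp a b => .imp (a.translate φ) (b.translate φ)
  | _, _, φ, .not a => .not (a.translate φ)
  | _, _, φ, .all V vs ρ => .all V (φ.sortMap ∘ vs) (ρ.translate (φ.extend V vs))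
  | _, _, φ, .ex V vs ρ => .ex V (φ.sortMap ∘ vs) (ρ.translate (φ.extend V vs))

theorem eval_translate {S S' : Type} {Sig : MSSignature S} {Sig' : MSSignature S'}
    (φ : MSSigMorphism Sig Sig') (A' : MSAlgebra Sig') :
    ∀ {s : S} (t : MSTerm Sig s), A'.eval (t.translate φ) = (φ.reduct A').eval t := by
  intro s t
  induction t with
  | app σ args ih =>
    show A'.op (φ.opMap σ) _ = A'.op (φ.opMap σ) _
    congr 1
    funext i
    exact ih i

theorem expand_op_inr {S : Type} {Sig : MSSignature S} (A : MSAlgebra Sig) {V : Type}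
    {vs : V → S} (θ : ∀ v, A.carrier (vs v)) {n : ℕ} {ar : Fin n → S} {s : S}
    (v : V) (h1 : vs v = s) (h2 : n = 0) (args : ∀ i, A.carrier (ar i)) :
    (A.expand θ).op (Sum.inr ⟨v, h1, h2⟩) args = h1 ▸ θ v := rfl

theorem extend_opMap_inr {S S' : Type} {Sig : MSSignature S} {Sig' : MSSignature S'}
    (φ : MSSigMorphism Sig Sig') {V : Type} {vs : V → S} {n : ℕ} {ar : Fin n → S} {s : S}
    (v : V) (h1 : vs v = s) (h2 : n = 0) :
    (φ.extend V vs).opMap (n := n) (ar := ar) (Sum.inr ⟨v, h1, h2⟩) =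
      Sum.inr ⟨v, congrArg φ.sortMap h1, h2⟩ := rfl

theorem reduct_expand {S S' : Type} {Sig : MSSignature S} {Sig' : MSSignature S'}
    (φ : MSSigMorphism Sig Sig') (A' : MSAlgebra Sig') {V : Type} {vs : V → S}
    (θ : ∀ v, (φ.reduct A').carrier (vs v)) :
    (φ.extend V vs).reduct (A'.expand θ) = (φ.reduct A').expand θ := by
  show MSAlgebra.mk _ _ = MSAlgebra.mk _ _
  congr 1
  funext n ar s σ args
  rcases σ with σ | ⟨v, hv, hn⟩
  · rfl
  · cases hv
    show (A'.expand θ).op ((φ.extend V vs).opMap (Sum.inr ⟨v, rfl, hn⟩)) args = θ v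
    rw [extend_opMap_inr]
    · exact expand_op_inr A' θ v rfl hn args
    · rfl
    · exact hn

/-- the Satisfaction Lemma for many-sorted algebra. -/
theorem stmt3 {S S' : Type} {Sig : MSSignature S} {Sig' : MSSignature S'}
    (φ : MSSigMorphism Sig Sig') (ρ : MSSentence Sig) (A' : MSAlgebra Sig') :
    MSSatisfies A' (ρ.translate φ) ↔ MSSatisfies (φ.reduct A') ρ := by
  induction ρ generalizing S' with
  | eq t t' =>
    show A'.eval (t.translate φ) = A'.eval (t'.translate φ) ↔
      (φ.reduct A').eval t = (φ.reduct A').eval t'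
    rw [eval_translate, eval_translate]
    exact Iff.rfl
  | and a b iha ihb => exact and_congr (iha φ A') (ihb φ A')
  | or a b iha ihb => exact or_congr (iha φ A') (ihb φ A')
  | imp a b iha ihb => exact imp_congr (iha φ A') (ihb φ A')
  | not a iha => exact not_congr (iha φ A')
  | all V vs ρ ih =>
    constructor
    · intro h θ
      rw [← reduct_expand φ A' θ]
      exact (ih (φ.extend V vs) (A'.expand θ)).mp (h θ)
    · intro h θ
      exact (ih (φ.extend V vs) (A'.expand θ)).mpr (reduct_expand φ A' θ ▸ h θ)
  | ex V vs ρ ih =>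
    apply not_congr
    constructor
    · intro h θ
      have := h θ
      rw [← reduct_expand φ A' θ]
      intro hc
      exact this ((ih (φ.extend V vs) (A'.expand θ)).mpr (reduct_expand φ A' θ ▸ hc))
    · intro h θ hc
      exact (reduct_expand φ A' θ ▸ h θ) ((ih (φ.extend V vs) (A'.expand θ)).mp hc)
end

section
/- Let Γ be a set of (D,S,F)-transitions and B a (D∪S,F)-algebra. Then the preordered algebra (B, ⟶*_{Γ/B}) satisfies every transition in Γ: for each ∀X. H ⇒ (t → t') in Γ and each valuation θ : X → B such that θu = θu' for every equation (u = u') ∈ H^eq and θu ⟶*_{Γ/B} θu' for every transition atom (u → u') ∈ H^tr, it holds that θt ⟶*_{Γ/B} θt'. -/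
/-! Preordered algebra (POA) -/

structure POASignature where
  Sorts : Type
  isSys : Sorts → Bool
  sig : MSSignature Sorts

structure POAlgebra (P : POASignature) extends MSAlgebra P.sig where
  le : ∀ s, P.isSys s = true → carrier s → carrier s → Prop
  le_refl : ∀ s (hs : P.isSys s = true) (a : carrier s), le s hs a a
  le_trans : ∀ s (hs : P.isSys s = true) (a b c : carrier s),
    le s hs a b → le s hs b c → le s hs a c
  monotone : ∀ {n : ℕ} {ar : Fin n → P.Sorts} {s : P.Sorts}
      (σ : P.sig.Op n ar s) (hs : P.isSys s = true)
      (args args' : ∀ i, carrier (ar i)),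
      (∀ i, if h : P.isSys (ar i) = true
            then le (ar i) h (args i) (args' i) else args i = args' i) →
      le s hs (op σ args) (op σ args')

/-- A "model" over any signature with the sorts of `P`: an algebra together with a
family of binary relations on the system-sorted carriers (no axioms required);
used to define satisfaction, including for expansions by variables. -/
structure POAModel (P : POASignature) (Sig : MSSignature P.Sorts) where
  alg : MSAlgebra Sig
  le : ∀ s, P.isSys s = true → alg.carrier s → alg.carrier s → Prop

def POAlgebra.toModel {P : POASignature} (A : POAlgebra P) : POAModel P P.sig :=
  ⟨A.toMSAlgebra, A.le⟩

def POAModel.expand {P : POASignature} {Sig : MSSignature P.Sorts} (M : POAModel P Sig)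
    {V : Type} {vs : V → P.Sorts} (θ : ∀ v, M.alg.carrier (vs v)) :
    POAModel P (Sig.extend V vs) :=
  ⟨M.alg.expand θ, M.le⟩

inductive POASentence (P : POASignature) : MSSignature P.Sorts → Type 1 where
  | eq {Sig : MSSignature P.Sorts} {s : P.Sorts} (t t' : MSTerm Sig s) : POASentence P Sig
  | tr {Sig : MSSignature P.Sorts} {s : P.Sorts} (hs : P.isSys s = true)
      (t t' : MSTerm Sig s) : POASentence P Sig
  | and {Sig : MSSignature P.Sorts} (a b : POASentence P Sig) : POASentence P Sig
  | or {Sig : MSSignature P.Sorts} (a b : POASentence P Sig) : POASentence P Sig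
  | imp {Sig : MSSignature P.Sorts} (a b : POASentence P Sig) : POASentence P Sig
  | not {Sig : MSSignature P.Sorts} (a : POASentence P Sig) : POASentence P Sig
  | all {Sig : MSSignature P.Sorts} (V : Type) (vs : V → P.Sorts)
      (ρ : POASentence P (Sig.extend V vs)) : POASentence P Sig
  | ex {Sig : MSSignature P.Sorts} (V : Type) (vs : V → P.Sorts)
      (ρ : POASentence P (Sig.extend V vs)) : POASentence P Sig

def POASat {P : POASignature} :
    ∀ {Sig : MSSignature P.Sorts}, POAModel P Sig → POASentence P Sig → Prop
  | _, M, .eq t t' => M.alg.eval t = M.alg.eval t'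
  | _, M, .tr hs t t' => M.le _ hs (M.alg.eval t) (M.alg.eval t')
  | _, M, .and a b => POASat M a ∧ POASat M b
  | _, M, .or a b => POASat M a ∨ POASat M b
  | _, M, .imp a b => POASat M a → POASat M b
  | _, M, .not a => ¬ POASat M a
  | _, M, .all _ _ ρ => ∀ θ, POASat (M.expand θ) ρ
  | _, M, .ex _ _ ρ => ¬ ∀ θ, ¬ POASat (M.expand θ) ρ

structure POASigMorphism (P P' : POASignature) where
  toMS : MSSigMorphism P.sig P'.sig
  sys_pres : ∀ s, P'.isSys (toMS.sortMap s) = P.isSys s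

def POASigMorphism.reductModel {P P' : POASignature} (φ : POASigMorphism P P')
    (M' : POAModel P' P'.sig) : POAModel P P.sig where
  alg := φ.toMS.reduct M'.alg
  le s hs := M'.le (φ.toMS.sortMap s) (by rw [φ.sys_pres]; exact hs)

def POASentence.translate {P P' : POASignature} :
    ∀ {Sig : MSSignature P.Sorts} {Sig' : MSSignature P'.Sorts}
      (f : MSSigMorphism Sig Sig'),
      (∀ s, P'.isSys (f.sortMap s) = P.isSys s) →
      POASentence P Sig → POASentence P' Sig'
  | _, _, f, _, .eq t t' => .eq (t.translate f) (t'.translate f)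
  | _, _, f, hf, .tr hs t t' => .tr (by rw [hf]; exact hs) (t.translate f) (t'.translate f)
  | _, _, f, hf, .and a b => .and (a.translate f hf) (b.translate f hf)
  | _, _, f, hf, .or a b => .or (a.translate f hf) (b.translate f hf)
  | _, _, f, hf, .imp a b => .imp (a.translate f hf) (b.translate f hf)
  | _, _, f, hf, .not a => .not (a.translate f hf)
  | _, _, f, hf, .all V vs ρ => .all V (f.sortMap ∘ vs) (ρ.translate (f.extend V vs) hf)
  | _, _, f, hf, .ex V vs ρ => .ex V (f.sortMap ∘ vs) (ρ.translate (f.extend V vs) hf)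

def POASigMorphism.sen {P P' : POASignature} (φ : POASigMorphism P P') :
    POASentence P P.sig → POASentence P' P'.sig :=
  fun ρ => ρ.translate φ.toMS φ.sys_pres
/-! Algebraic rewriting -/

/-- Sorted binary relations on the carriers of an algebra. -/
def SortedRel {S : Type} {Sig : MSSignature S} (B : MSAlgebra Sig) : Type :=
  ∀ s, B.carrier s → B.carrier s → Prop

/-- Sortwise reflexive-transitive closure. -/
def rtc {S : Type} {Sig : MSSignature S} {B : MSAlgebra Sig} (R : SortedRel B) : SortedRel B :=
  fun s => Relation.ReflTransGen (R s)

/-- A (D,S,F)-transition: a Horn sentence `∀X. H ⇒ (t → t')` where `H` is a finite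
conjunction of equational atoms and of transition atoms (the latter at system sorts),
and `t, t'` are terms of the same system sort. -/
structure TransitionRule (P : POASignature) where
  V : Type
  vs : V → P.Sorts
  eqCond : Set (Σ s : P.Sorts, MSTerm (P.sig.extend V vs) s × MSTerm (P.sig.extend V vs) s)
  trCond : Set (Σ s : P.Sorts, MSTerm (P.sig.extend V vs) s × MSTerm (P.sig.extend V vs) s)
  eqCond_finite : eqCond.Finite
  trCond_finite : trCond.Finite
  trCond_sys : ∀ e ∈ trCond, P.isSys e.1 = true
  sort : P.Sorts
  sort_sys : P.isSys sort = true
  lhs : MSTerm (P.sig.extend V vs) sort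
  rhs : MSTerm (P.sig.extend V vs) sort

/-- Number of occurrences of the extra variables in a term over an extended signature. -/
def varCount {S : Type} {Sig : MSSignature S} {V : Type} {vs : V → S} :
    ∀ {s : S}, MSTerm (Sig.extend V vs) s → ℕ
  | _, .app σ args =>
      (match σ with
        | Sum.inl _ => 0
        | Sum.inr _ => 1) + ∑ i, varCount (args i)

/-- A rewriting context: a term over the signature extended with a single
fresh variable `z` (of sort `zs`), with exactly one occurrence of `z`. -/
def IsContext {S : Type} {Sig : MSSignature S} {zs s : S}
    (c : MSTerm (Sig.extend Unit (fun _ => zs)) s) : Prop :=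
  varCount c = 1

/-- The function `B_c` induced by a context. -/
def applyCtx {S : Type} {Sig : MSSignature S} (B : MSAlgebra Sig) {zs s : S}
    (c : MSTerm (Sig.extend Unit (fun _ => zs)) s) (b : B.carrier zs) : B.carrier s :=
  (B.expand (fun _ => b)).eval c

/-- `Γ(Ω)` : one application of a rule of `Γ` inside a context, with the equational
conditions holding on the nose and the transition conditions holding in `Ω`. -/
def GammaOf {P : POASignature} (Γ : Set (TransitionRule P)) (B : MSAlgebra P.sig)
    (Ω : SortedRel B) : SortedRel B :=
  fun s b b' =>
    P.isSys s = true ∧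
    ∃ r ∈ Γ, ∃ c : MSTerm (P.sig.extend Unit (fun _ => r.sort)) s,
      IsContext c ∧
      ∃ θ : ∀ v, B.carrier (r.vs v),
        (∀ e ∈ r.eqCond, (B.expand θ).eval e.2.1 = (B.expand θ).eval e.2.2) ∧
        (∀ e ∈ r.trCond, Ω e.1 ((B.expand θ).eval e.2.1) ((B.expand θ).eval e.2.2)) ∧
        b = applyCtx B c ((B.expand θ).eval r.lhs) ∧
        b' = applyCtx B c ((B.expand θ).eval r.rhs)

/-- The relations `Γ_{B,k}`. -/
def GammaIter {P : POASignature} (Γ : Set (TransitionRule P)) (B : MSAlgebra P.sig) :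
    ℕ → SortedRel B
  | 0 => fun _ => Eq
  | k + 1 => fun s b b' =>
      rtc (GammaIter Γ B k) s b b' ∨ GammaOf Γ B (rtc (GammaIter Γ B k)) s b b'

/-- `b ⟶_{Γ/B} b'`. -/
def oneStep {P : POASignature} (Γ : Set (TransitionRule P)) (B : MSAlgebra P.sig) :
    SortedRel B :=
  fun s b b' => ∃ k, GammaOf Γ B (rtc (GammaIter Γ B k)) s b b'

/-- `b ⟶*_{Γ/B} b'`, the algebraic rewriting relation. -/
def rew {P : POASignature} (Γ : Set (TransitionRule P)) (B : MSAlgebra P.sig) :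
    SortedRel B :=
  rtc (oneStep Γ B)

/-- Satisfaction of a transition rule by an algebra equipped with a sorted relation. -/
def SatRule {P : POASignature} (B : MSAlgebra P.sig) (le : SortedRel B)
    (r : TransitionRule P) : Prop :=
  ∀ θ : ∀ v, B.carrier (r.vs v),
    (∀ e ∈ r.eqCond, (B.expand θ).eval e.2.1 = (B.expand θ).eval e.2.2) →
    (∀ e ∈ r.trCond, le e.1 ((B.expand θ).eval e.2.1) ((B.expand θ).eval e.2.2)) →
    le r.sort ((B.expand θ).eval r.lhs) ((B.expand θ).eval r.rhs)

/-- The sorted relation of a preordered algebra (trivial at data sorts). -/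
def POAlgebra.relOf {P : POASignature} (A : POAlgebra P) : SortedRel A.toMSAlgebra :=
  fun s a a' => ∀ hs : P.isSys s = true, A.le s hs a a'

/-- A homomorphism of algebras-with-sorted-relations, monotone on system sorts
(the notion of POA homomorphism). -/
structure MonHom {P : POASignature} (B : MSAlgebra P.sig) (rB : SortedRel B)
    (C : MSAlgebra P.sig) (rC : SortedRel C) extends MSHom B C where
  mono : ∀ s, P.isSys s = true → ∀ b b', rB s b b' → rC s (toFun s b) (toFun s b')

/-- A conditional equation `∀X. H ⇒ (lhs = rhs)`. -/
structure CondEq {S : Type} (Sig : MSSignature S) where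
  V : Type
  vs : V → S
  cond : Set (Σ s : S, MSTerm (Sig.extend V vs) s × MSTerm (Sig.extend V vs) s)
  cond_finite : cond.Finite
  sort : S
  lhs : MSTerm (Sig.extend V vs) sort
  rhs : MSTerm (Sig.extend V vs) sort

def SatCondEq {S : Type} {Sig : MSSignature S} (B : MSAlgebra Sig) (e : CondEq Sig) : Prop :=
  ∀ θ : ∀ v, B.carrier (e.vs v),
    (∀ c ∈ e.cond, (B.expand θ).eval c.2.1 = (B.expand θ).eval c.2.2) →
    (B.expand θ).eval e.lhs = (B.expand θ).eval e.rhs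


section Stmt7Aux

open Relation

lemma GammaOf_mono' {P : POASignature} (Γ : Set (TransitionRule P)) (B : MSAlgebra P.sig)
    {Ω Ω' : SortedRel B} (h : ∀ s a a', Ω s a a' → Ω' s a a') {s b b'} :
    GammaOf Γ B Ω s b b' → GammaOf Γ B Ω' s b b' := by
  rintro ⟨hs, r, hr, c, hc, θ, heq, htr, h1, h2⟩
  exact ⟨hs, r, hr, c, hc, θ, heq, fun e he => h _ _ _ (htr e he), h1, h2⟩

lemma GammaIter_succ' {P : POASignature} (Γ : Set (TransitionRule P)) (B : MSAlgebra P.sig)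
    (k : ℕ) {s b b'} (h : GammaIter Γ B k s b b') : GammaIter Γ B (k+1) s b b' :=
  Or.inl (ReflTransGen.single h)

lemma GammaIter_le' {P : POASignature} (Γ : Set (TransitionRule P)) (B : MSAlgebra P.sig)
    {k k' : ℕ} (hk : k ≤ k') {s b b'} (h : GammaIter Γ B k s b b') :
    GammaIter Γ B k' s b b' := by
  induction hk with
  | refl => exact h
  | step _ ih => exact GammaIter_succ' Γ B _ ih

lemma rew_bound' {P : POASignature} (Γ : Set (TransitionRule P)) (B : MSAlgebra P.sig)
    {s b b'} (h : rew Γ B s b b') : ∃ k, rtc (GammaIter Γ B k) s b b' := by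
  induction h with
  | refl => exact ⟨0, ReflTransGen.refl⟩
  | tail _ hstep ih =>
    obtain ⟨k1, h1⟩ := ih
    obtain ⟨k2, h2⟩ := hstep
    have h1' : rtc (GammaIter Γ B (max k1 k2 + 1)) s b _ :=
      ReflTransGen.mono (fun a b h => GammaIter_le' Γ B (Nat.le_succ_of_le (le_max_left _ _)) h) _ _ h1
    have h2' : GammaIter Γ B (max k1 k2 + 1) s _ _ :=
      Or.inr (GammaOf_mono' Γ B
        (fun s a a' h => ReflTransGen.mono
          (fun x y h => GammaIter_le' Γ B (le_max_right k1 k2) h) _ _ h) h2)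
    exact ⟨max k1 k2 + 1, ReflTransGen.tail h1' h2'⟩

def trivCtx {S : Type} {Sig : MSSignature S} (zs : S) :
    MSTerm (Sig.extend Unit fun _ => zs) zs :=
  .app (n := 0) (ar := Fin.elim0) (Sum.inr ⟨(), rfl, rfl⟩) (fun i => i.elim0)

lemma trivCtx_isContext {S : Type} {Sig : MSSignature S} (zs : S) :
    IsContext (Sig := Sig) (trivCtx zs) := by
  simp [IsContext, trivCtx, varCount]

lemma applyCtx_trivCtx {S : Type} {Sig : MSSignature S} (B : MSAlgebra Sig) (zs : S)
    (b : B.carrier zs) : applyCtx B (trivCtx zs) b = b := by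
  show (B.expand fun _ => b).eval (trivCtx zs) = b
  rw [trivCtx]
  simp only [MSAlgebra.eval, MSAlgebra.expand]
  split <;> simp_all

end Stmt7Aux

/-- `(B, ⟶*_{Γ/B})` satisfies every transition of `Γ`. -/
theorem stmt7 {P : POASignature} (Γ : Set (TransitionRule P)) (B : MSAlgebra P.sig) :
    ∀ r ∈ Γ, SatRule B (rew Γ B) r := by
  intro r hr θ heq htr
  have hbound : ∀ e ∈ r.trCond,
      ∃ k, rtc (GammaIter Γ B k) e.1 ((B.expand θ).eval e.2.1) ((B.expand θ).eval e.2.2) :=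
    fun e he => rew_bound' Γ B (htr e he)
  haveI := r.trCond_finite.fintype
  choose f hf using fun (e : r.trCond) => hbound e e.2
  set K := Finset.univ.sup f with hK
  have hKf : ∀ e ∈ r.trCond,
      rtc (GammaIter Γ B K) e.1 ((B.expand θ).eval e.2.1) ((B.expand θ).eval e.2.2) := by
    intro e he
    exact Relation.ReflTransGen.mono
      (fun a b h => GammaIter_le' Γ B (Finset.le_sup (Finset.mem_univ ⟨e, he⟩)) h) _ _ (hf ⟨e, he⟩)
  have hstep : GammaOf Γ B (rtc (GammaIter Γ B K)) r.sort
      ((B.expand θ).eval r.lhs) ((B.expand θ).eval r.rhs) :=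
    ⟨r.sort_sys, r, hr, trivCtx r.sort, trivCtx_isContext r.sort, θ, heq, hKf,
      (applyCtx_trivCtx B r.sort _).symm, (applyCtx_trivCtx B r.sort _).symm⟩
  exact Relation.ReflTransGen.single ⟨K, hstep⟩
end

section
/- (Soundness of the operational semantics.) Let β : B → N be an nf-homomorphism, Γ a β-coherent set of (D,S,F)-transitions, and β' : N → B' any (D∪S,F)-homomorphism. Then β' is a POA homomorphism (N, ⟶*_{Γ/β}) → (B', ⟶*_{Γ/B'}): n1 ⟶*_{Γ/β} n2 implies β'(n1) ⟶*_{Γ/B'} β'(n2). -/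
/-! Normal forms: nf-homomorphisms -/

/-- An nf-homomorphism `β : B → N`: the carriers of `N` are subsets of the carriers
of `B` (realized as subtypes), `N` carries its own algebra structure `nop`,
`nf` (= β) is a homomorphism `B → N` and is the identity on `N`. -/
structure NFData {P : POASignature} (B : MSAlgebra P.sig) where
  mem : ∀ s, Set (B.carrier s)
  nop : ∀ {n : ℕ} {ar : Fin n → P.Sorts} {s : P.Sorts},
    P.sig.Op n ar s → (∀ i, ↥(mem (ar i))) → ↥(mem s)
  nf : ∀ s, B.carrier s → ↥(mem s)
  nf_hom : ∀ {n : ℕ} {ar : Fin n → P.Sorts} {s : P.Sorts}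
    (σ : P.sig.Op n ar s) (args : ∀ i, B.carrier (ar i)),
    nf s (B.op σ args) = nop σ (fun i => nf (ar i) (args i))
  nf_inv : ∀ s (x : ↥(mem s)), nf s (x : B.carrier s) = x

/-- The algebra `N` of an nf-homomorphism. -/
def NFData.Nalg {P : POASignature} {B : MSAlgebra P.sig} (F : NFData B) :
    MSAlgebra P.sig where
  carrier s := ↥(F.mem s)
  op := F.nop

/-- `β` as a homomorphism `B → N`. -/
def NFData.hom {P : POASignature} {B : MSAlgebra P.sig} (F : NFData B) :
    MSHom B F.Nalg where
  toFun := F.nf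
  map_op := F.nf_hom

/-- The relation `⟶_{Γ/β}` on `N`. -/
def NFData.stepβ {P : POASignature} {B : MSAlgebra P.sig} (F : NFData B)
    (Γ : Set (TransitionRule P)) : SortedRel F.Nalg :=
  fun s n1 n2 => ∃ b2, oneStep Γ B s (Subtype.val n1) b2 ∧ F.nf s b2 = n2

/-- The relation `⟶*_{Γ/β}` on `N`. -/
def NFData.rewβ {P : POASignature} {B : MSAlgebra P.sig} (F : NFData B)
    (Γ : Set (TransitionRule P)) : SortedRel F.Nalg :=
  rtc (F.stepβ Γ)

/-- `Γ` is `β`-coherent. -/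
def Coherent {P : POASignature} {B : MSAlgebra P.sig} (F : NFData B)
    (Γ : Set (TransitionRule P)) : Prop :=
  ∀ s b1 b2, oneStep Γ B s b1 b2 → F.rewβ Γ s (F.nf s b1) (F.nf s b2)

/-- The term `c` (a constant applied to no arguments) over an extended signature. -/
def constTerm {S : Type} {Sig : MSSignature S} {V : Type} {vs : V → S}
    {ar : Fin 0 → S} {s : S} (c : Sig.Op 0 ar s) : MSTerm (Sig.extend V vs) s :=
  .app (Sum.inl c) (fun i => i.elim0)

/-- The value `B_c` of a constant `c` in `B`. -/
def constVal {S : Type} {Sig : MSSignature S} (B : MSAlgebra Sig)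
    {ar : Fin 0 → S} {s : S} (c : Sig.Op 0 ar s) : B.carrier s :=
  B.op c (fun i => i.elim0)

/-- Condition (i): each rule of `Γ` has only equational conditions, each of the
form `t_i = c_i` with `c_i` a constant whose value in `B` lies in `N`. -/
def CondConstants {P : POASignature} {B : MSAlgebra P.sig} (F : NFData B)
    (Γ : Set (TransitionRule P)) : Prop :=
  ∀ r ∈ Γ, r.trCond = ∅ ∧
    ∀ e ∈ r.eqCond, ∃ (ar : Fin 0 → P.Sorts) (c : P.sig.Op 0 ar e.1),
      e.2.2 = constTerm c ∧ constVal B c ∈ F.mem e.1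

/-- No junk at sort `s`: every element of `B_s` is the value of a constant lying in `N`. -/
def NoJunk {P : POASignature} {B : MSAlgebra P.sig} (F : NFData B) (s : P.Sorts) : Prop :=
  ∀ b : B.carrier s, ∃ (ar : Fin 0 → P.Sorts) (c : P.sig.Op 0 ar s),
    constVal B c ∈ F.mem s ∧ constVal B c = b

/-- No confusion at sort `s`: distinct constants with value in `N` have distinct values. -/
def NoConfusion {P : POASignature} {B : MSAlgebra P.sig} (F : NFData B) (s : P.Sorts) : Prop :=
  ∀ (ar ar' : Fin 0 → P.Sorts) (c : P.sig.Op 0 ar s) (c' : P.sig.Op 0 ar' s),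
    constVal B c ∈ F.mem s → constVal B c' ∈ F.mem s →
    constVal B c = constVal B c' → HEq c c'

/-- Condition (ii): no junk and no confusion at every sort of an equation occurring
in a condition of a rule of `Γ`. -/
def CondProtected {P : POASignature} {B : MSAlgebra P.sig} (F : NFData B)
    (Γ : Set (TransitionRule P)) : Prop :=
  ∀ r ∈ Γ, ∀ e ∈ r.eqCond, NoJunk F e.1 ∧ NoConfusion F e.1

/-- A homomorphism commutes with evaluation in expansions. -/
lemma hom_eval_expand {S : Type} {Sig : MSSignature S} {B C : MSAlgebra Sig}
    (h : MSHom B C) {V : Type} {vs : V → S} (θ : ∀ v, B.carrier (vs v)) :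
    ∀ {s : S} (t : MSTerm (Sig.extend V vs) s),
      h.toFun s ((B.expand θ).eval t) =
        (C.expand (fun v => h.toFun (vs v) (θ v))).eval t
  | _, .app σ args => by
    cases σ with
    | inl σ =>
        show h.toFun _ (B.op σ _) = C.op σ _
        refine (h.map_op σ _).trans ?_
        congr 1
        funext i
        exact hom_eval_expand h θ (args i)
    | inr w =>
        obtain ⟨v, hv, hn⟩ := w
        subst hv
        rfl

lemma hom_applyCtx {S : Type} {Sig : MSSignature S} {B C : MSAlgebra Sig}
    (h : MSHom B C) {zs s : S} (c : MSTerm (Sig.extend Unit (fun _ => zs)) s)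
    (b : B.carrier zs) :
    h.toFun s (applyCtx B c b) = applyCtx C c (h.toFun zs b) :=
  hom_eval_expand h (fun _ => b) c

lemma gammaOf_hom {P : POASignature} (Γ : Set (TransitionRule P))
    {B B' : MSAlgebra P.sig} (h : MSHom B B')
    (Ω : SortedRel B) (Ω' : SortedRel B')
    (hΩ : ∀ s b b', Ω s b b' → Ω' s (h.toFun s b) (h.toFun s b')) :
    ∀ s b b', GammaOf Γ B Ω s b b' → GammaOf Γ B' Ω' s (h.toFun s b) (h.toFun s b') := by
  rintro s b b' ⟨hs, r, hr, c, hc, θ, heq, htr, hb, hb'⟩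
  refine ⟨hs, r, hr, c, hc, fun v => h.toFun (r.vs v) (θ v), ?_, ?_, ?_, ?_⟩
  · intro e he
    rw [← hom_eval_expand, ← hom_eval_expand, heq e he]
  · intro e he
    rw [← hom_eval_expand, ← hom_eval_expand]
    exact hΩ _ _ _ (htr e he)
  · rw [hb]; exact (hom_applyCtx h c _).trans (congrArg (applyCtx B' c) (hom_eval_expand h θ r.lhs))
  · rw [hb']; exact (hom_applyCtx h c _).trans (congrArg (applyCtx B' c) (hom_eval_expand h θ r.rhs))

lemma rtc_hom {S : Type} {Sig : MSSignature S} {B C : MSAlgebra Sig}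
    (h : MSHom B C) (R : SortedRel B) (R' : SortedRel C)
    (hR : ∀ s b b', R s b b' → R' s (h.toFun s b) (h.toFun s b')) :
    ∀ s b b', rtc R s b b' → rtc R' s (h.toFun s b) (h.toFun s b') :=
  fun s _ _ hbb => Relation.ReflTransGen.lift (h.toFun s) (hR s) _ _ hbb

lemma gammaIter_hom {P : POASignature} (Γ : Set (TransitionRule P))
    {B B' : MSAlgebra P.sig} (h : MSHom B B') :
    ∀ k s b b', GammaIter Γ B k s b b' →
      GammaIter Γ B' k s (h.toFun s b) (h.toFun s b') := by
  intro k
  induction k with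
  | zero => intro s b b' hbb; exact congrArg _ hbb
  | succ k ih =>
      intro s b b' hbb
      cases hbb with
      | inl hbb => exact Or.inl (rtc_hom h _ _ ih s b b' hbb)
      | inr hbb =>
          exact Or.inr (gammaOf_hom Γ h _ _ (rtc_hom h _ _ ih) s b b' hbb)

lemma oneStep_hom {P : POASignature} (Γ : Set (TransitionRule P))
    {B B' : MSAlgebra P.sig} (h : MSHom B B') (s : P.Sorts) (b b' : B.carrier s)
    (hbb : oneStep Γ B s b b') : oneStep Γ B' s (h.toFun s b) (h.toFun s b') := by
  obtain ⟨k, hk⟩ := hbb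
  exact ⟨k, gammaOf_hom Γ h _ _ (rtc_hom h _ _ (gammaIter_hom Γ h k)) s b b' hk⟩

/-- soundness of the operational semantics. -/
theorem stmt11 {P : POASignature} (Γ : Set (TransitionRule P)) (B B' : MSAlgebra P.sig)
    (F : NFData B) (hcoh : Coherent F Γ) (β' : MSHom F.Nalg B') :
    ∀ s, P.isSys s = true → ∀ n1 n2, F.rewβ Γ s n1 n2 →
      rew Γ B' s (β'.toFun s n1) (β'.toFun s n2) := by
  intro s _ n1 n2 hrw
  have key : ∀ m1 m2 : F.Nalg.carrier s, F.stepβ Γ s m1 m2 →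
      oneStep Γ B' s (β'.toFun s m1) (β'.toFun s m2) := by
    rintro m1 m2 ⟨b2, hstep, hnf⟩
    have h := oneStep_hom Γ (F.hom.comp β') s (Subtype.val m1) b2 hstep
    have e1 : (F.hom.comp β').toFun s (Subtype.val m1) = β'.toFun s m1 := by
      show β'.toFun s (F.nf s (Subtype.val m1)) = β'.toFun s m1
      exact congrArg (β'.toFun s) (F.nf_inv s m1)
    have e2 : (F.hom.comp β').toFun s b2 = β'.toFun s m2 := by
      show β'.toFun s (F.nf s b2) = β'.toFun s m2
      rw [hnf]
    rwa [e1, e2] at h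
  exact Relation.ReflTransGen.lift (β'.toFun s) (key) _ _ hrw
end

section
/- (Completeness conditions.) Let β : B → N be an nf-homomorphism and Γ a β-coherent set of (D,S,F)-transitions such that: (i) for each transition ∀X. H ⇒ (t → t') in Γ, H is a finite conjunction of equations of the form t_i = c_i where each c_i is a constant (operation symbol of empty arity) with B_{c_i} ∈ N; (ii) for each sort s of such an equation t_i = c_i, every element of B_s equals B_c for some constant c ∈ F_{→s} with B_c ∈ N (no junk), and B_c ≠ B_{c'} for all distinct constants c, c' ∈ F_{→s} with B_c, B_{c'} ∈ N (no confusion). Then the preordered algebra (N, ⟶*_{Γ/β}) satisfies every transition in Γ. -/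
/-- nf commutes with evaluation over an extended signature. -/
lemma nf_eval {P : POASignature} {B : MSAlgebra P.sig} (F : NFData B)
    {V : Type} {vs : V → P.Sorts} (θ : ∀ v, (F.Nalg).carrier (vs v)) :
    ∀ {s : P.Sorts} (t : MSTerm (P.sig.extend V vs) s),
      F.nf s ((B.expand (fun v => (θ v).val)).eval t) = ((F.Nalg).expand θ).eval t
  | _, .app σ args => by
    cases σ with
    | inl σ =>
        show F.nf _ (B.op σ _) = (F.Nalg).op σ _
        refine (F.nf_hom σ _).trans ?_
        show F.nop σ _ = F.nop σ _
        congr 1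
        funext i
        exact nf_eval F θ (args i)
    | inr v =>
        obtain ⟨v, hv, hn⟩ := v
        show F.nf _ (hv ▸ ((θ v).val)) = hv ▸ θ v
        cases hv
        exact F.nf_inv _ _

/-- The identity context. -/
def idCtx {S : Type} (Sig : MSSignature S) (zs : S) :
    MSTerm (Sig.extend Unit (fun _ => zs)) zs :=
  .app (n := 0) (ar := Fin.elim0) (Sum.inr ⟨(), rfl, rfl⟩) (fun i => i.elim0)

lemma idCtx_isContext {S : Type} (Sig : MSSignature S) (zs : S) :
    IsContext (idCtx Sig zs) := by
  show varCount _ = 1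
  simp [idCtx, varCount]

lemma applyCtx_idCtx {S : Type} {Sig : MSSignature S} (B : MSAlgebra Sig) {zs : S}
    (b : B.carrier zs) : applyCtx B (idCtx Sig zs) b = b := by
  show (B.expand (fun _ => b)).eval (idCtx Sig zs) = b
  rw [idCtx]
  simp only [MSAlgebra.eval]
  simp [MSAlgebra.expand]
  split
  · contradiction
  · rfl

lemma eval_constTerm {S : Type} {Sig : MSSignature S} {V : Type} {vs : V → S}
    (B : MSAlgebra Sig) (θ : ∀ v, B.carrier (vs v)) {ar : Fin 0 → S} {s : S}
    (c : Sig.Op 0 ar s) :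
    (B.expand θ).eval (constTerm c) = constVal B c := by
  show B.op c _ = B.op c _
  congr 1
  funext i
  exact i.elim0

/-- completeness conditions: `(N, ⟶*_{Γ/β})` satisfies `Γ`. -/
theorem stmt12 {P : POASignature} (Γ : Set (TransitionRule P)) (B : MSAlgebra P.sig)
    (F : NFData B) (hcoh : Coherent F Γ)
    (hconst : CondConstants F Γ) (hprot : CondProtected F Γ) :
    ∀ r ∈ Γ, SatRule F.Nalg (F.rewβ Γ) r := by
  intro r hr θ heq _htr
  set θ' : ∀ v, B.carrier (r.vs v) := fun v => (θ v).val with hθ'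
  -- equational conditions hold on the nose in B
  have heqB : ∀ e ∈ r.eqCond,
      (B.expand θ').eval e.2.1 = (B.expand θ').eval e.2.2 := by
    intro e he
    obtain ⟨ar, c, hc, hmem⟩ := (hconst r hr).2 e he
    obtain ⟨ar', c', hmem', hval⟩ := (hprot r hr e he).1 ((B.expand θ').eval e.2.1)
    have hnf : F.nf e.1 ((B.expand θ').eval e.2.1) = F.nf e.1 ((B.expand θ').eval e.2.2) := by
      rw [nf_eval F θ, nf_eval F θ, heq e he]
    have h1 : F.nf e.1 ((B.expand θ').eval e.2.1) = ⟨constVal B c', hmem'⟩ := by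
      rw [← hval]; exact F.nf_inv _ ⟨constVal B c', hmem'⟩
    have h2 : F.nf e.1 ((B.expand θ').eval e.2.2) = ⟨constVal B c, hmem⟩ := by
      rw [hc, eval_constTerm]; exact F.nf_inv _ ⟨constVal B c, hmem⟩
    have : (⟨constVal B c', hmem'⟩ : ↥(F.mem e.1)) = ⟨constVal B c, hmem⟩ := by
      rw [← h1, hnf, h2]
    have hvv : constVal B c' = constVal B c := congrArg Subtype.val this
    rw [← hval, hvv, hc, eval_constTerm]
  -- one step in B from lhs to rhs
  have hstep : oneStep Γ B r.sort ((B.expand θ').eval r.lhs) ((B.expand θ').eval r.rhs) := by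
    refine ⟨0, r.sort_sys, r, hr, idCtx P.sig r.sort, idCtx_isContext _ _, θ', heqB, ?_, ?_, ?_⟩
    · intro e he
      rw [(hconst r hr).1] at he
      exact absurd he (Set.notMem_empty e)
    · exact (applyCtx_idCtx B _).symm
    · exact (applyCtx_idCtx B _).symm
  have := hcoh r.sort _ _ hstep
  rwa [nf_eval F θ, nf_eval F θ] at this
end

section
/- Every pushout square in the category of POA signatures and POA signature morphisms is a model amalgamation square. -/
/-! The category of POA signatures, reducts, amalgamation -/

def POASigMorphism.id (P : POASignature) : POASigMorphism P P where
  toMS := ⟨fun s => s, fun σ => σ⟩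
  sys_pres _ := rfl

def POASigMorphism.comp {P1 P2 P3 : POASignature}
    (φ : POASigMorphism P1 P2) (ψ : POASigMorphism P2 P3) : POASigMorphism P1 P3 where
  toMS := ⟨fun s => ψ.toMS.sortMap (φ.toMS.sortMap s),
           fun σ => ψ.toMS.opMap (φ.toMS.opMap σ)⟩
  sys_pres s := by rw [ψ.sys_pres, φ.sys_pres]

/-- Reduct of a preordered algebra along a POA signature morphism. -/
def POASigMorphism.reduct {P P' : POASignature} (φ : POASigMorphism P P')
    (A' : POAlgebra P') : POAlgebra P where
  carrier s := A'.carrier (φ.toMS.sortMap s)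
  op σ args := A'.op (φ.toMS.opMap σ) args
  le s hs := A'.le (φ.toMS.sortMap s) (by rw [φ.sys_pres]; exact hs)
  le_refl s hs a := A'.le_refl _ _ a
  le_trans s hs a b c hab hbc := A'.le_trans _ _ a b c hab hbc
  monotone := by
    intro n ar s σ hs args args' hargs
    refine A'.monotone (φ.toMS.opMap σ) (by rw [φ.sys_pres]; exact hs) args args' ?_
    intro i
    have hi := hargs i
    simp only [Function.comp_apply]
    by_cases hb : P.isSys (ar i) = true
    · rw [dif_pos hb] at hi
      rw [dif_pos (show P'.isSys (φ.toMS.sortMap (ar i)) = true by rw [φ.sys_pres]; exact hb)]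
      exact hi
    · rw [dif_neg hb] at hi
      rw [dif_neg (show ¬ P'.isSys (φ.toMS.sortMap (ar i)) = true by rw [φ.sys_pres]; exact hb)]
      exact hi

/-- Homomorphisms of preordered algebras. -/
structure POAHom {P : POASignature} (A B : POAlgebra P) extends
    MSHom A.toMSAlgebra B.toMSAlgebra where
  mono : ∀ s (hs : P.isSys s = true) a a', A.le s hs a a' → B.le s hs (toFun s a) (toFun s a')

/-- Reduct of a POA homomorphism. -/
def POASigMorphism.reductHom {P P' : POASignature} (φ : POASigMorphism P P')
    {A' B' : POAlgebra P'} (h' : POAHom A' B') : POAHom (φ.reduct A') (φ.reduct B') where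
  toFun s := h'.toFun (φ.toMS.sortMap s)
  map_op σ args := h'.map_op (φ.toMS.opMap σ) args
  mono _s _hs a a' h := h'.mono _ _ a a' h

/-- A model homomorphism packaged with its source and target. -/
structure HomObj (P : POASignature) where
  src : POAlgebra P
  tgt : POAlgebra P
  hom : POAHom src tgt

def POASigMorphism.reductHomObj {P P' : POASignature} (φ : POASigMorphism P P')
    (H : HomObj P') : HomObj P :=
  ⟨φ.reduct H.src, φ.reduct H.tgt, φ.reductHom H.hom⟩

/-- A commutative square of POA signature morphisms is a pushout square. -/
def IsPushoutSquare {P P1 P2 P' : POASignature}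
    (φ1 : POASigMorphism P P1) (φ2 : POASigMorphism P P2)
    (θ1 : POASigMorphism P1 P') (θ2 : POASigMorphism P2 P') : Prop :=
  φ1.comp θ1 = φ2.comp θ2 ∧
  ∀ (Q : POASignature) (ψ1 : POASigMorphism P1 Q) (ψ2 : POASigMorphism P2 Q),
    φ1.comp ψ1 = φ2.comp ψ2 →
    ∃! μ : POASigMorphism P' Q, θ1.comp μ = ψ1 ∧ θ2.comp μ = ψ2

/-- A commutative square of POA signature morphisms is a model amalgamation square:
unique amalgamation of models and of model homomorphisms. -/
def IsAmalgamationSquare {P P1 P2 P' : POASignature}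
    (φ1 : POASigMorphism P P1) (φ2 : POASigMorphism P P2)
    (θ1 : POASigMorphism P1 P') (θ2 : POASigMorphism P2 P') : Prop :=
  (∀ (M1 : POAlgebra P1) (M2 : POAlgebra P2), φ1.reduct M1 = φ2.reduct M2 →
    ∃! M' : POAlgebra P', θ1.reduct M' = M1 ∧ θ2.reduct M' = M2) ∧
  (∀ (H1 : HomObj P1) (H2 : HomObj P2), φ1.reductHomObj H1 = φ2.reductHomObj H2 →
    ∃! H' : HomObj P', θ1.reductHomObj H' = H1 ∧ θ2.reductHomObj H' = H2)
/-! ### Auxiliary infrastructure for stmt14 -/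

namespace Stmt14Aux

/-- Extensionality for many-sorted signature morphisms. -/
theorem msmor_ext {S S' : Type} {Sig : MSSignature S} {Sig' : MSSignature S'}
    {f g : MSSigMorphism Sig Sig'} (h : f.sortMap = g.sortMap)
    (hop : ∀ (n : ℕ) (ar : Fin n → S) (s : S) (σ : Sig.Op n ar s),
      HEq (f.opMap σ) (g.opMap σ)) : f = g := by
  cases f with
  | mk fs fo =>
    cases g with
    | mk gs go =>
      dsimp at h
      subst h
      have : @fo = @go := by
        funext n ar s σ
        exact eq_of_heq (hop n ar s σ)
      subst this
      rfl

theorem poamor_ext {P P' : POASignature} {f g : POASigMorphism P P'}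
    (h : f.toMS = g.toMS) : f = g := by
  cases f; cases g; dsimp at h; subst h; rfl

theorem comp_assoc {P1 P2 P3 P4 : POASignature} (f : POASigMorphism P1 P2)
    (g : POASigMorphism P2 P3) (h : POASigMorphism P3 P4) :
    (f.comp g).comp h = f.comp (g.comp h) := rfl

theorem msalg_ext {S : Type} {Sig : MSSignature S} {A B : MSAlgebra Sig}
    (h : A.carrier = B.carrier) (hop : HEq @A.op @B.op) : A = B := by
  cases A; cases B; dsimp at h; subst h; cases hop; rfl

theorem poalg_ext {P : POASignature} {A B : POAlgebra P}
    (h : A.toMSAlgebra = B.toMSAlgebra) (hle : HEq A.le B.le) : A = B := by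
  cases A; cases B; dsimp at h; subst h; cases hle; rfl

theorem poahom_ext {P : POASignature} {A B : POAlgebra P} {f g : POAHom A B}
    (h : f.toFun = g.toFun) : f = g := by
  cases f with
  | mk f0 m0 => cases g with
    | mk g0 m0' => cases f0; cases g0; dsimp at h; subst h; rfl

theorem poahom_heq {P : POASignature} {A A' B B' : POAlgebra P}
    (hA : A = A') (hB : B = B') {f : POAHom A B} {g : POAHom A' B'}
    (h : ∀ s, HEq (f.toFun s) (g.toFun s)) : HEq f g := by
  subst hA; subst hB
  exact heq_of_eq (poahom_ext (funext fun s => eq_of_heq (h s)))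

theorem poahom_toFun_heq {P : POASignature} {A A' B B' : POAlgebra P}
    (hA : A = A') (hB : B = B') {f : POAHom A B} {g : POAHom A' B'}
    (h : HEq f g) : ∀ s, HEq (f.toFun s) (g.toFun s) := by
  subst hA; subst hB; cases h; intro s; rfl

theorem homobj_ext {P : POASignature} {H K : HomObj P}
    (hs : H.src = K.src) (ht : H.tgt = K.tgt) (hh : HEq H.hom K.hom) : H = K := by
  cases H; cases K; dsimp at hs ht; subst hs; subst ht; cases hh; rfl

end Stmt14Aux
namespace Stmt14Aux

section Surj

variable {P P1 P2 P' : POASignature}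
  (φ1 : POASigMorphism P P1) (φ2 : POASigMorphism P P2)
  (θ1 : POASigMorphism P1 P') (θ2 : POASigMorphism P2 P')

/-- Probe signature for sort surjectivity: sorts are (Prop, label). -/
def QP (P' : POASignature) : POASignature :=
  ⟨Prop × Bool, Prod.snd, ⟨fun _ _ _ => PUnit⟩⟩

def InImS (s' : P'.Sorts) : Prop :=
  (∃ s1, θ1.toMS.sortMap s1 = s') ∨ (∃ s2, θ2.toMS.sortMap s2 = s')

theorem sortSurj (hcomm : φ1.comp θ1 = φ2.comp θ2)
    (hump : ∀ (Q : POASignature) (ψ1 : POASigMorphism P1 Q) (ψ2 : POASigMorphism P2 Q),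
      φ1.comp ψ1 = φ2.comp ψ2 →
      ∃! μ : POASigMorphism P' Q, θ1.comp μ = ψ1 ∧ θ2.comp μ = ψ2) :
    ∀ s', InImS θ1 θ2 s' := by
  intro s'
  let ψa : POASigMorphism P' (QP P') :=
    ⟨⟨fun s => (True, P'.isSys s), fun _ => PUnit.unit⟩, fun _ => rfl⟩
  let ψb : POASigMorphism P' (QP P') :=
    ⟨⟨fun s => (InImS θ1 θ2 s, P'.isSys s), fun _ => PUnit.unit⟩, fun _ => rfl⟩
  have hb1 : θ1.comp ψb = θ1.comp ψa := by
    apply poamor_ext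
    apply msmor_ext
    · funext s1
      show (InImS θ1 θ2 (θ1.toMS.sortMap s1), _) = (True, _)
      have : InImS θ1 θ2 (θ1.toMS.sortMap s1) = True :=
        eq_true (Or.inl ⟨s1, rfl⟩)
      rw [this]
    · intro n ar s σ
      exact HEq.rfl
  have hb2 : θ2.comp ψb = θ2.comp ψa := by
    apply poamor_ext
    apply msmor_ext
    · funext s2
      have : InImS θ1 θ2 (θ2.toMS.sortMap s2) = True :=
        eq_true (Or.inr ⟨s2, rfl⟩)
      show (InImS θ1 θ2 (θ2.toMS.sortMap s2), _) = (True, _)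
      rw [this]
    · intro n ar s σ
      exact HEq.rfl
  have hsq : φ1.comp (θ1.comp ψa) = φ2.comp (θ2.comp ψa) := by
    rw [← comp_assoc, ← comp_assoc, hcomm]
  obtain ⟨μ, _, huniq⟩ := hump (QP P') (θ1.comp ψa) (θ2.comp ψa) hsq
  have ha : ψa = μ := huniq ψa ⟨rfl, rfl⟩
  have hb : ψb = μ := huniq ψb ⟨hb1, hb2⟩
  have : ψa = ψb := ha.trans hb.symm
  have h2 : True = InImS θ1 θ2 s' :=
    congrArg (fun χ : POASigMorphism P' (QP P') => (χ.toMS.sortMap s').1) this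
  exact of_eq_true h2.symm

/-- Probe signature for operation surjectivity. -/
def QO (P' : POASignature) : POASignature :=
  ⟨P'.Sorts, P'.isSys, ⟨fun n ar s => P'.sig.Op n ar s × Prop⟩⟩

def InImO {n : ℕ} {ar' : Fin n → P'.Sorts} {s' : P'.Sorts}
    (σ' : P'.sig.Op n ar' s') : Prop :=
  (∃ (ar1 : Fin n → P1.Sorts) (s1 : P1.Sorts) (σ1 : P1.sig.Op n ar1 s1),
      θ1.toMS.sortMap ∘ ar1 = ar' ∧ θ1.toMS.sortMap s1 = s' ∧ HEq (θ1.toMS.opMap σ1) σ') ∨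
  (∃ (ar2 : Fin n → P2.Sorts) (s2 : P2.Sorts) (σ2 : P2.sig.Op n ar2 s2),
      θ2.toMS.sortMap ∘ ar2 = ar' ∧ θ2.toMS.sortMap s2 = s' ∧ HEq (θ2.toMS.opMap σ2) σ')

theorem opSurj (hcomm : φ1.comp θ1 = φ2.comp θ2)
    (hump : ∀ (Q : POASignature) (ψ1 : POASigMorphism P1 Q) (ψ2 : POASigMorphism P2 Q),
      φ1.comp ψ1 = φ2.comp ψ2 →
      ∃! μ : POASigMorphism P' Q, θ1.comp μ = ψ1 ∧ θ2.comp μ = ψ2) :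
    ∀ {n : ℕ} {ar' : Fin n → P'.Sorts} {s' : P'.Sorts} (σ' : P'.sig.Op n ar' s'),
      InImO θ1 θ2 σ' := by
  intro n ar' s' σ'
  let ψa : POASigMorphism P' (QO P') :=
    ⟨⟨fun s => s, fun σ => (σ, True)⟩, fun _ => rfl⟩
  let ψb : POASigMorphism P' (QO P') :=
    ⟨⟨fun s => s, fun σ => (σ, InImO θ1 θ2 σ)⟩, fun _ => rfl⟩
  have hb1 : θ1.comp ψb = θ1.comp ψa := by
    apply poamor_ext
    refine msmor_ext ?_ ?_
    · rfl
    intro n ar s σ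
    apply heq_of_eq
    show (θ1.toMS.opMap σ, InImO θ1 θ2 (θ1.toMS.opMap σ)) = (θ1.toMS.opMap σ, True)
    have : InImO θ1 θ2 (θ1.toMS.opMap σ) = True :=
      eq_true (Or.inl ⟨ar, s, σ, rfl, rfl, HEq.rfl⟩)
    rw [this]
  have hb2 : θ2.comp ψb = θ2.comp ψa := by
    apply poamor_ext
    refine msmor_ext ?_ ?_
    · rfl
    intro n ar s σ
    apply heq_of_eq
    show (θ2.toMS.opMap σ, InImO θ1 θ2 (θ2.toMS.opMap σ)) = (θ2.toMS.opMap σ, True)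
    have : InImO θ1 θ2 (θ2.toMS.opMap σ) = True :=
      eq_true (Or.inr ⟨ar, s, σ, rfl, rfl, HEq.rfl⟩)
    rw [this]
  have hsq : φ1.comp (θ1.comp ψa) = φ2.comp (θ2.comp ψa) := by
    rw [← comp_assoc, ← comp_assoc, hcomm]
  obtain ⟨μ, _, huniq⟩ := hump (QO P') (θ1.comp ψa) (θ2.comp ψa) hsq
  have ha : ψa = μ := huniq ψa ⟨rfl, rfl⟩
  have hb : ψb = μ := huniq ψb ⟨hb1, hb2⟩
  have h : ψa = ψb := ha.trans hb.symm
  have h2 : True = InImO θ1 θ2 σ' :=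
    congrArg
      (fun χ : POASigMorphism P' (QO P') => (χ.toMS.opMap (n := n) (ar := ar') (s := s') σ').2) h
  exact of_eq_true h2.symm

end Surj
end Stmt14Aux
namespace Stmt14Aux

theorem op_app_congr {S : Type} {Sig : MSSignature S} {X Y : MSAlgebra Sig}
    (h : X = Y) {n : ℕ} {ar : Fin n → S} {s : S} (σ : Sig.Op n ar s)
    (args : ∀ i, X.carrier (ar i)) (args' : ∀ i, Y.carrier (ar i))
    (hargs : HEq args args') : HEq (X.op σ args) (Y.op σ args') := by
  subst h
  have : args = args' := eq_of_heq hargs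
  subst this
  rfl

theorem le_app_congr {P : POASignature} {X Y : POAlgebra P}
    (h : X = Y) (s : P.Sorts) (hs : P.isSys s = true)
    (a a' : X.carrier s) (b b' : Y.carrier s)
    (ha : HEq a b) (ha' : HEq a' b') : X.le s hs a a' = Y.le s hs b b' := by
  subst h
  have h1 : a = b := eq_of_heq ha
  have h2 : a' = b' := eq_of_heq ha'
  subst h1; subst h2
  rfl

section Sep

variable {P1 P2 P' : POASignature}
  (θ1 : POASigMorphism P1 P') (θ2 : POASigMorphism P2 P')

theorem modelSep
    (hS : ∀ s', InImS θ1 θ2 s')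
    (hO : ∀ {n : ℕ} {ar' : Fin n → P'.Sorts} {s' : P'.Sorts} (σ' : P'.sig.Op n ar' s'),
      InImO θ1 θ2 σ')
    (A B : POAlgebra P')
    (h1 : θ1.reduct A = θ1.reduct B) (h2 : θ2.reduct A = θ2.reduct B) : A = B := by
  have hc : A.carrier = B.carrier := by
    funext s'
    rcases hS s' with ⟨s1, rfl⟩ | ⟨s2, rfl⟩
    · exact congrArg (fun X : POAlgebra P1 => X.carrier s1) h1
    · exact congrArg (fun X : POAlgebra P2 => X.carrier s2) h2
  cases A with
  | mk msA leA rA tA mA =>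
    cases B with
    | mk msB leB rB tB mB =>
      cases msA with
      | mk cA opA =>
        cases msB with
        | mk cB opB =>
          dsimp at hc
          subst hc
          have hr1 : (θ1.reduct ⟨⟨cA, @opA⟩, leA, rA, tA, mA⟩).toMSAlgebra =
              (θ1.reduct ⟨⟨cA, @opB⟩, leB, rB, tB, mB⟩).toMSAlgebra :=
            congrArg POAlgebra.toMSAlgebra h1
          have hr2 : (θ2.reduct ⟨⟨cA, @opA⟩, leA, rA, tA, mA⟩).toMSAlgebra =
              (θ2.reduct ⟨⟨cA, @opB⟩, leB, rB, tB, mB⟩).toMSAlgebra :=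
            congrArg POAlgebra.toMSAlgebra h2
          have hopeq : @opA = @opB := by
            funext n ar' s' σ' args
            rcases hO σ' with ⟨ar1, s1, σ1, har, hs, hσ⟩ | ⟨ar2, s2, σ2, har, hs, hσ⟩
            · subst har; subst hs
              have hσ' : θ1.toMS.opMap σ1 = σ' := eq_of_heq hσ
              subst hσ'
              exact eq_of_heq (op_app_congr hr1 σ1 args args HEq.rfl)
            · subst har; subst hs
              have hσ' : θ2.toMS.opMap σ2 = σ' := eq_of_heq hσ
              subst hσ'
              exact eq_of_heq (op_app_congr hr2 σ2 args args HEq.rfl)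
          subst hopeq
          have hleeq : leA = leB := by
            funext s' hs' a a'
            rcases hS s' with ⟨s1, rfl⟩ | ⟨s2, rfl⟩
            · have hsys : P1.isSys s1 = true := by rw [← θ1.sys_pres]; exact hs'
              exact le_app_congr h1 s1 hsys a a' a a' HEq.rfl HEq.rfl
            · have hsys : P2.isSys s2 = true := by rw [← θ2.sys_pres]; exact hs'
              exact le_app_congr h2 s2 hsys a a' a a' HEq.rfl HEq.rfl
          subst hleeq
          rfl

end Sep
end Stmt14Aux
namespace Stmt14Aux

section HSep

variable {P1 P2 P' : POASignature}
  (θ1 : POASigMorphism P1 P') (θ2 : POASigMorphism P2 P')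

theorem homSep
    (hS : ∀ s', InImS θ1 θ2 s')
    (hO : ∀ {n : ℕ} {ar' : Fin n → P'.Sorts} {s' : P'.Sorts} (σ' : P'.sig.Op n ar' s'),
      InImO θ1 θ2 σ')
    (H K : HomObj P')
    (h1 : θ1.reductHomObj H = θ1.reductHomObj K)
    (h2 : θ2.reductHomObj H = θ2.reductHomObj K) : H = K := by
  have hsrc : H.src = K.src :=
    modelSep θ1 θ2 hS hO _ _
      (congrArg HomObj.src h1) (congrArg HomObj.src h2)
  have htgt : H.tgt = K.tgt :=
    modelSep θ1 θ2 hS hO _ _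
      (congrArg HomObj.tgt h1) (congrArg HomObj.tgt h2)
  cases H with
  | mk As Bs f =>
    cases K with
    | mk As' Bs' g =>
      dsimp at hsrc htgt
      subst hsrc; subst htgt
      have hf : f = g := by
        apply poahom_ext
        funext s' a
        rcases hS s' with ⟨s1, rfl⟩ | ⟨s2, rfl⟩
        · have hh : HEq (θ1.reductHomObj ⟨As, Bs, f⟩).hom
              (θ1.reductHomObj ⟨As, Bs, g⟩).hom := by rw [h1]
          have := poahom_toFun_heq (congrArg HomObj.src h1) (congrArg HomObj.tgt h1) hh s1
          exact congrFun (eq_of_heq this) a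
        · have hh : HEq (θ2.reductHomObj ⟨As, Bs, f⟩).hom
              (θ2.reductHomObj ⟨As, Bs, g⟩).hom := by rw [h2]
          have := poahom_toFun_heq (congrArg HomObj.src h2) (congrArg HomObj.tgt h2) hh s2
          exact congrFun (eq_of_heq this) a
      subst hf
      rfl

end HSep
end Stmt14Aux
namespace Stmt14Aux

/-- A small preordered type: a "pack". -/
structure Pk where
  X : Type
  r : X → X → Prop
  refl' : ∀ a, r a a
  trans' : ∀ a b c, r a b → r b c → r a c

theorem pk_ext {p q : Pk} (hX : p.X = q.X) (hr : HEq p.r q.r) : p = q := by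
  cases p; cases q; dsimp at hX; subst hX; cases hr; rfl

/-- The pack of a preordered algebra at a sort. -/
def pkAt {P : POASignature} (M : POAlgebra P) (s : P.Sorts) : Pk where
  X := M.carrier s
  r a a' := if h : P.isSys s = true then M.le s h a a' else a = a'
  refl' a := by
    by_cases h : P.isSys s = true
    · rw [dif_pos h]; exact M.le_refl s h a
    · rw [dif_neg h]
  trans' a b c hab hbc := by
    by_cases h : P.isSys s = true
    · rw [dif_pos h]; rw [dif_pos h] at hab hbc; exact M.le_trans s h a b c hab hbc
    · rw [dif_neg h]; rw [dif_neg h] at hab hbc; exact hab.trans hbc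

/-- Reducts are compatible with packs. -/
theorem pkAt_reduct {P P1 : POASignature} (φ : POASigMorphism P P1)
    (M : POAlgebra P1) (s : P.Sorts) :
    pkAt M (φ.toMS.sortMap s) = pkAt (φ.reduct M) s := by
  refine pk_ext ?_ ?_
  · rfl
  apply heq_of_eq
  funext a a'
  show (if h : P1.isSys (φ.toMS.sortMap s) = true then M.le _ h a a' else a = a') =
    (if h : P.isSys s = true then (φ.reduct M).le s h a a' else a = a')
  by_cases h : P.isSys s = true
  · have h' : P1.isSys (φ.toMS.sortMap s) = true := by rw [φ.sys_pres]; exact h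
    rw [dif_pos h, dif_pos h']
    rfl
  · have h' : ¬ P1.isSys (φ.toMS.sortMap s) = true := by rw [φ.sys_pres]; exact h
    rw [dif_neg h, dif_neg h']

section Exist

variable {P P1 P2 : POASignature}
  (φ1 : POASigMorphism P P1) (φ2 : POASigMorphism P P2)

/-- The relation generating the sort pushout. -/
def SR : (P1.Sorts ⊕ P2.Sorts) → (P1.Sorts ⊕ P2.Sorts) → Prop := fun x y =>
  ∃ s, x = Sum.inl (φ1.toMS.sortMap s) ∧ y = Sum.inr (φ2.toMS.sortMap s)

def T0 := Quot (SR φ1 φ2)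

def lab0 : T0 φ1 φ2 → Bool :=
  Quot.lift (Sum.elim P1.isSys P2.isSys) (by
    rintro x y ⟨s, rfl, rfl⟩
    show P1.isSys (φ1.toMS.sortMap s) = P2.isSys (φ2.toMS.sortMap s)
    rw [φ1.sys_pres, φ2.sys_pres])

variable {M1 : POAlgebra P1} {M2 : POAlgebra P2}

def PK0 (hred : φ1.reduct M1 = φ2.reduct M2) : T0 φ1 φ2 → Pk :=
  Quot.lift (Sum.elim (pkAt M1) (pkAt M2)) (by
    rintro x y ⟨s, rfl, rfl⟩
    show pkAt M1 (φ1.toMS.sortMap s) = pkAt M2 (φ2.toMS.sortMap s)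
    rw [pkAt_reduct φ1 M1 s, pkAt_reduct φ2 M2 s, hred])

/-- The probe signature for model amalgamation. -/
def mkQ (T : Type) (lab : T → Bool) (PK : T → Pk) : POASignature :=
  ⟨T, lab,
    ⟨fun n ar s =>
      {f : (∀ i, (PK (ar i)).X) → (PK s).X //
        lab s = true → ∀ a a', (∀ i, (PK (ar i)).r (a i) (a' i)) → (PK s).r (f a) (f a')}⟩⟩

/-- Any POA signature morphism into `mkQ` induces a preordered algebra. -/
def algOf {T : Type} {lab : T → Bool} {PK : T → Pk} {P'' : POASignature}
    (χ : POASigMorphism P'' (mkQ T lab PK)) : POAlgebra P'' where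
  carrier s := (PK (χ.toMS.sortMap s)).X
  op σ args := (χ.toMS.opMap σ).1 args
  le s _ := (PK (χ.toMS.sortMap s)).r
  le_refl s hs a := (PK (χ.toMS.sortMap s)).refl' a
  le_trans s hs a b c := (PK (χ.toMS.sortMap s)).trans' a b c
  monotone := by
    intro n ar s σ hs args args' hargs
    refine (χ.toMS.opMap σ).2 (show (mkQ T lab PK).isSys (χ.toMS.sortMap s) = true by rw [χ.sys_pres]; exact hs) args args' ?_
    intro i
    have hi := hargs i
    by_cases hb : P''.isSys (ar i) = true
    · rw [dif_pos hb] at hi; exact hi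
    · rw [dif_neg hb] at hi
      rw [hi]
      exact (PK (χ.toMS.sortMap (ar i))).refl' _

theorem reduct_algOf {T : Type} {lab : T → Bool} {PK : T → Pk}
    {P'' P''' : POASignature} (θ : POASigMorphism P'' P''')
    (χ : POASigMorphism P''' (mkQ T lab PK)) :
    θ.reduct (algOf χ) = algOf (θ.comp χ) := rfl

end Exist
end Stmt14Aux
namespace Stmt14Aux

theorem pkAt_r_sys {P : POASignature} {M : POAlgebra P} {s : P.Sorts}
    (hs : P.isSys s = true) {a a' : M.carrier s} :
    (pkAt M s).r a a' ↔ M.le s hs a a' := by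
  show (if h : P.isSys s = true then M.le s h a a' else a = a') ↔ _
  rw [dif_pos hs]

theorem mkQ_op_heq {T : Type} {lab : T → Bool} {PK : T → Pk} {n : ℕ}
    {ar ar' : Fin n → T} {s s' : T} (h1 : ar = ar') (h2 : s = s')
    (x : (mkQ T lab PK).sig.Op n ar s) (y : (mkQ T lab PK).sig.Op n ar' s')
    (hv : HEq x.1 y.1) : HEq x y := by
  subst h1; subst h2
  exact heq_of_eq (Subtype.ext (eq_of_heq hv))

section Exist2

variable {P P1 P2 : POASignature}
  (φ1 : POASigMorphism P P1) (φ2 : POASigMorphism P P2)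
  {M1 : POAlgebra P1} {M2 : POAlgebra P2}

def Q0 (hred : φ1.reduct M1 = φ2.reduct M2) : POASignature :=
  mkQ (T0 φ1 φ2) (lab0 φ1 φ2) (PK0 φ1 φ2 hred)

def psi1 (hred : φ1.reduct M1 = φ2.reduct M2) :
    POASigMorphism P1 (Q0 φ1 φ2 hred) where
  toMS :=
    { sortMap := fun s => Quot.mk _ (Sum.inl s)
      opMap := fun {n ar s} σ =>
        ⟨fun args => M1.op σ args, by
          intro hs a a' hr
          have hs' : P1.isSys s = true := hs
          refine (pkAt_r_sys hs').mpr ?_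
          exact M1.monotone σ hs' a a' hr⟩ }
  sys_pres _ := rfl

def psi2 (hred : φ1.reduct M1 = φ2.reduct M2) :
    POASigMorphism P2 (Q0 φ1 φ2 hred) where
  toMS :=
    { sortMap := fun s => Quot.mk _ (Sum.inr s)
      opMap := fun {n ar s} σ =>
        ⟨fun args => M2.op σ args, by
          intro hs a a' hr
          have hs' : P2.isSys s = true := hs
          refine (pkAt_r_sys hs').mpr ?_
          exact M2.monotone σ hs' a a' hr⟩ }
  sys_pres _ := rfl

theorem hcsq (hred : φ1.reduct M1 = φ2.reduct M2) :
    φ1.comp (psi1 φ1 φ2 hred) = φ2.comp (psi2 φ1 φ2 hred) := by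
  apply poamor_ext
  refine msmor_ext ?_ ?_
  · funext s
    exact Quot.sound ⟨s, rfl, rfl⟩
  · intro n ar s σ
    refine mkQ_op_heq (funext fun i => Quot.sound ⟨ar i, rfl, rfl⟩)
      (Quot.sound ⟨s, rfl, rfl⟩) _ _ ?_
    show HEq ((φ1.reduct M1).op (n := n) (ar := ar) (s := s) σ)
      ((φ2.reduct M2).op (n := n) (ar := ar) (s := s) σ)
    rw [hred]

theorem algOf_psi1 (hred : φ1.reduct M1 = φ2.reduct M2) :
    algOf (psi1 φ1 φ2 hred) = M1 := by
  refine poalg_ext rfl ?_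
  apply heq_of_eq
  show (fun s (_ : P1.isSys s = true) => (pkAt M1 s).r) = M1.le
  funext s hs a a'
  exact propext (pkAt_r_sys hs)

theorem algOf_psi2 (hred : φ1.reduct M1 = φ2.reduct M2) :
    algOf (psi2 φ1 φ2 hred) = M2 := by
  refine poalg_ext rfl ?_
  apply heq_of_eq
  show (fun s (_ : P2.isSys s = true) => (pkAt M2 s).r) = M2.le
  funext s hs a a'
  exact propext (pkAt_r_sys hs)

end Exist2
end Stmt14Aux
namespace Stmt14Aux

/-- A pack for homomorphisms: two preordered types and a monotone map. -/
structure HPk where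
  A : Pk
  B : Pk
  f : A.X → B.X
  mono : ∀ a a', A.r a a' → B.r (f a) (f a')

theorem hpk_ext {p q : HPk} (hA : p.A = q.A) (hB : p.B = q.B)
    (hf : HEq p.f q.f) : p = q := by
  cases p; cases q; dsimp at hA hB; subst hA; subst hB; cases hf; rfl

def hpkAt {P : POASignature} (H : HomObj P) (s : P.Sorts) : HPk where
  A := pkAt H.src s
  B := pkAt H.tgt s
  f := H.hom.toFun s
  mono a a' h := by
    dsimp only [pkAt] at h ⊢
    by_cases hs : P.isSys s = true
    · rw [dif_pos hs] at h ⊢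
      exact H.hom.mono s hs a a' h
    · rw [dif_neg hs] at h ⊢
      rw [h]

theorem hpkAt_reduct {P P1 : POASignature} (φ : POASigMorphism P P1)
    (H : HomObj P1) (s : P.Sorts) :
    hpkAt H (φ.toMS.sortMap s) = hpkAt (φ.reductHomObj H) s := by
  refine hpk_ext ?_ ?_ ?_
  · exact pkAt_reduct φ H.src s
  · exact pkAt_reduct φ H.tgt s
  · exact HEq.rfl

/-- Probe signature for homomorphism amalgamation. -/
def mkHQ (T : Type) (lab : T → Bool) (HPK : T → HPk) : POASignature :=
  ⟨T, lab,
    ⟨fun n ar s =>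
      {p : ((∀ i, (HPK (ar i)).A.X) → (HPK s).A.X) ×
           ((∀ i, (HPK (ar i)).B.X) → (HPK s).B.X) //
        (lab s = true →
          (∀ a a', (∀ i, (HPK (ar i)).A.r (a i) (a' i)) → (HPK s).A.r (p.1 a) (p.1 a')) ∧
          (∀ b b', (∀ i, (HPK (ar i)).B.r (b i) (b' i)) → (HPK s).B.r (p.2 b) (p.2 b'))) ∧
        (∀ a, (HPK s).f (p.1 a) = p.2 (fun i => (HPK (ar i)).f (a i)))}⟩⟩

theorem mkHQ_op_heq {T : Type} {lab : T → Bool} {HPK : T → HPk} {n : ℕ}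
    {ar ar' : Fin n → T} {s s' : T} (h1 : ar = ar') (h2 : s = s')
    (x : (mkHQ T lab HPK).sig.Op n ar s) (y : (mkHQ T lab HPK).sig.Op n ar' s')
    (hvA : HEq x.1.1 y.1.1) (hvB : HEq x.1.2 y.1.2) : HEq x y := by
  subst h1; subst h2
  exact heq_of_eq (Subtype.ext (Prod.ext (eq_of_heq hvA) (eq_of_heq hvB)))

def piA (T : Type) (lab : T → Bool) (HPK : T → HPk) :
    POASigMorphism (mkHQ T lab HPK) (mkQ T lab (fun t => (HPK t).A)) :=
  ⟨⟨fun t => t, fun p => ⟨p.1.1, fun hs => (p.2.1 hs).1⟩⟩, fun _ => rfl⟩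

def piB (T : Type) (lab : T → Bool) (HPK : T → HPk) :
    POASigMorphism (mkHQ T lab HPK) (mkQ T lab (fun t => (HPK t).B)) :=
  ⟨⟨fun t => t, fun p => ⟨p.1.2, fun hs => (p.2.1 hs).2⟩⟩, fun _ => rfl⟩

def homObjOf {T : Type} {lab : T → Bool} {HPK : T → HPk} {P'' : POASignature}
    (χ : POASigMorphism P'' (mkHQ T lab HPK)) : HomObj P'' where
  src := algOf (χ.comp (piA T lab HPK))
  tgt := algOf (χ.comp (piB T lab HPK))
  hom :=
    { toFun := fun s => (HPK (χ.toMS.sortMap s)).f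
      map_op := fun σ args => (χ.toMS.opMap σ).2.2 args
      mono := fun s _ a a' h => (HPK (χ.toMS.sortMap s)).mono a a' h }

theorem reductHomObj_homObjOf {T : Type} {lab : T → Bool} {HPK : T → HPk}
    {P'' P''' : POASignature} (θ : POASigMorphism P'' P''')
    (χ : POASigMorphism P''' (mkHQ T lab HPK)) :
    θ.reductHomObj (homObjOf χ) = homObjOf (θ.comp χ) := rfl

section HExist

variable {P P1 P2 : POASignature}
  (φ1 : POASigMorphism P P1) (φ2 : POASigMorphism P P2)
  {H1 : HomObj P1} {H2 : HomObj P2}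

def HPK0 (hredH : φ1.reductHomObj H1 = φ2.reductHomObj H2) : T0 φ1 φ2 → HPk :=
  Quot.lift (Sum.elim (hpkAt H1) (hpkAt H2)) (by
    rintro x y ⟨s, rfl, rfl⟩
    show hpkAt H1 (φ1.toMS.sortMap s) = hpkAt H2 (φ2.toMS.sortMap s)
    rw [hpkAt_reduct φ1 H1 s, hpkAt_reduct φ2 H2 s, hredH])

def HQ0 (hredH : φ1.reductHomObj H1 = φ2.reductHomObj H2) : POASignature :=
  mkHQ (T0 φ1 φ2) (lab0 φ1 φ2) (HPK0 φ1 φ2 hredH)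

def hpsi1 (hredH : φ1.reductHomObj H1 = φ2.reductHomObj H2) :
    POASigMorphism P1 (HQ0 φ1 φ2 hredH) where
  toMS :=
    { sortMap := fun s => Quot.mk _ (Sum.inl s)
      opMap := fun {n ar s} σ =>
        ⟨(fun a => H1.src.op σ a, fun b => H1.tgt.op σ b),
          ⟨fun hs => by
            have hs' : P1.isSys s = true := hs
            constructor
            · intro a a' hr
              exact (pkAt_r_sys hs').mpr (H1.src.monotone σ hs' a a' hr)
            · intro b b' hr
              exact (pkAt_r_sys hs').mpr (H1.tgt.monotone σ hs' b b' hr),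
          fun a => H1.hom.map_op σ a⟩⟩ }
  sys_pres _ := rfl

def hpsi2 (hredH : φ1.reductHomObj H1 = φ2.reductHomObj H2) :
    POASigMorphism P2 (HQ0 φ1 φ2 hredH) where
  toMS :=
    { sortMap := fun s => Quot.mk _ (Sum.inr s)
      opMap := fun {n ar s} σ =>
        ⟨(fun a => H2.src.op σ a, fun b => H2.tgt.op σ b),
          ⟨fun hs => by
            have hs' : P2.isSys s = true := hs
            constructor
            · intro a a' hr
              exact (pkAt_r_sys hs').mpr (H2.src.monotone σ hs' a a' hr)
            · intro b b' hr
              exact (pkAt_r_sys hs').mpr (H2.tgt.monotone σ hs' b b' hr),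
          fun a => H2.hom.map_op σ a⟩⟩ }
  sys_pres _ := rfl

theorem hcsq_h (hredH : φ1.reductHomObj H1 = φ2.reductHomObj H2) :
    φ1.comp (hpsi1 φ1 φ2 hredH) = φ2.comp (hpsi2 φ1 φ2 hredH) := by
  apply poamor_ext
  refine msmor_ext ?_ ?_
  · funext s
    exact Quot.sound ⟨s, rfl, rfl⟩
  · intro n ar s σ
    refine mkHQ_op_heq (funext fun i => Quot.sound ⟨ar i, rfl, rfl⟩)
      (Quot.sound ⟨s, rfl, rfl⟩) _ _ ?_ ?_
    · show HEq ((φ1.reduct H1.src).op (n := n) (ar := ar) (s := s) σ)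
        ((φ2.reduct H2.src).op (n := n) (ar := ar) (s := s) σ)
      have : φ1.reduct H1.src = φ2.reduct H2.src := congrArg HomObj.src hredH
      rw [this]
    · show HEq ((φ1.reduct H1.tgt).op (n := n) (ar := ar) (s := s) σ)
        ((φ2.reduct H2.tgt).op (n := n) (ar := ar) (s := s) σ)
      have : φ1.reduct H1.tgt = φ2.reduct H2.tgt := congrArg HomObj.tgt hredH
      rw [this]

theorem homObjOf_hpsi1 (hredH : φ1.reductHomObj H1 = φ2.reductHomObj H2) :
    homObjOf (hpsi1 φ1 φ2 hredH) = H1 := by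
  have hsrc : (homObjOf (hpsi1 φ1 φ2 hredH)).src = H1.src := by
    refine poalg_ext rfl ?_
    apply heq_of_eq
    show (fun s (_ : P1.isSys s = true) => (pkAt H1.src s).r) = H1.src.le
    funext s hs a a'
    exact propext (pkAt_r_sys hs)
  have htgt : (homObjOf (hpsi1 φ1 φ2 hredH)).tgt = H1.tgt := by
    refine poalg_ext rfl ?_
    apply heq_of_eq
    show (fun s (_ : P1.isSys s = true) => (pkAt H1.tgt s).r) = H1.tgt.le
    funext s hs a a'
    exact propext (pkAt_r_sys hs)
  exact homobj_ext hsrc htgt (poahom_heq hsrc htgt (fun s => HEq.rfl))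

theorem homObjOf_hpsi2 (hredH : φ1.reductHomObj H1 = φ2.reductHomObj H2) :
    homObjOf (hpsi2 φ1 φ2 hredH) = H2 := by
  have hsrc : (homObjOf (hpsi2 φ1 φ2 hredH)).src = H2.src := by
    refine poalg_ext rfl ?_
    apply heq_of_eq
    show (fun s (_ : P2.isSys s = true) => (pkAt H2.src s).r) = H2.src.le
    funext s hs a a'
    exact propext (pkAt_r_sys hs)
  have htgt : (homObjOf (hpsi2 φ1 φ2 hredH)).tgt = H2.tgt := by
    refine poalg_ext rfl ?_
    apply heq_of_eq
    show (fun s (_ : P2.isSys s = true) => (pkAt H2.tgt s).r) = H2.tgt.le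
    funext s hs a a'
    exact propext (pkAt_r_sys hs)
  exact homobj_ext hsrc htgt (poahom_heq hsrc htgt (fun s => HEq.rfl))

end HExist
end Stmt14Aux
open Stmt14Aux


/-- pushout squares of POA signatures are model amalgamation squares. -/
theorem stmt14 {P P1 P2 P' : POASignature}
    (φ1 : POASigMorphism P P1) (φ2 : POASigMorphism P P2)
    (θ1 : POASigMorphism P1 P') (θ2 : POASigMorphism P2 P')
    (hpo : IsPushoutSquare φ1 φ2 θ1 θ2) :
    IsAmalgamationSquare φ1 φ2 θ1 θ2 := by
  obtain ⟨hcomm, hump⟩ := hpo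
  have hS := sortSurj φ1 φ2 θ1 θ2 hcomm hump
  have hO : ∀ {n : ℕ} {ar' : Fin n → P'.Sorts} {s' : P'.Sorts}
      (σ' : P'.sig.Op n ar' s'), InImO θ1 θ2 σ' :=
    fun σ' => opSurj φ1 φ2 θ1 θ2 hcomm hump σ'
  constructor
  · -- model amalgamation
    intro M1 M2 hred
    obtain ⟨μ, ⟨hμ1, hμ2⟩, _⟩ :=
      hump (Q0 φ1 φ2 hred) (psi1 φ1 φ2 hred) (psi2 φ1 φ2 hred) (hcsq φ1 φ2 hred)
    have e1 : θ1.reduct (algOf μ) = M1 := by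
      exact (reduct_algOf θ1 μ).trans ((congrArg algOf hμ1).trans (algOf_psi1 φ1 φ2 hred))
    have e2 : θ2.reduct (algOf μ) = M2 := by
      exact (reduct_algOf θ2 μ).trans ((congrArg algOf hμ2).trans (algOf_psi2 φ1 φ2 hred))
    refine ⟨algOf μ, ⟨e1, e2⟩, ?_⟩
    intro N ⟨hN1, hN2⟩
    exact modelSep θ1 θ2 hS (fun σ' => hO σ') N (algOf μ)
      (by rw [hN1, e1]) (by rw [hN2, e2])
  · -- homomorphism amalgamation
    intro H1 H2 hredH
    obtain ⟨μ, ⟨hμ1, hμ2⟩, _⟩ :=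
      hump (HQ0 φ1 φ2 hredH) (hpsi1 φ1 φ2 hredH) (hpsi2 φ1 φ2 hredH) (hcsq_h φ1 φ2 hredH)
    have e1 : θ1.reductHomObj (homObjOf μ) = H1 := by
      exact (reductHomObj_homObjOf θ1 μ).trans ((congrArg homObjOf hμ1).trans (homObjOf_hpsi1 φ1 φ2 hredH))
    have e2 : θ2.reductHomObj (homObjOf μ) = H2 := by
      exact (reductHomObj_homObjOf θ2 μ).trans ((congrArg homObjOf hμ2).trans (homObjOf_hpsi2 φ1 φ2 hredH))
    refine ⟨homObjOf μ, ⟨e1, e2⟩, ?_⟩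
    intro N ⟨hN1, hN2⟩
    exact homSep θ1 θ2 hS (fun σ' => hO σ') N (homObjOf μ)
      (by rw [hN1, e1]) (by rw [hN2, e2])
end
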